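/- Let C_1,…,C_m (m ≥ 2) be real full-row-rank matrices with n columns, K_i = kernel(C_i), P_i = C_iᵀ(C_iC_iᵀ)^{−1}C_i, and let M be the mn×mn block matrix whose i-th diagonal block is I_n − (1/2)P_i, whose (i, i−1) block (indices mod m) is (1/2)P_i, and whose remaining blocks are zero. If the weighted m-vertex directed cycle is well-configured (equivalently, {K_i : K_i ≠ {0}} is an independent family), then the eigenvalue 1 of M has algebraic multiplicity exactly n; in particular kernel(I − M)² = kernel(I − M), i.e., every Jordan block of M for the eigenvalue 1 has size 1. -/

import Mathlib

open Matrix Polynomial Module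

/-- The `mn × mn` stacked update matrix of the cycle iteration
`x i (t+1) = x i t − (1/2) P i (x i t − x (i-1) t)` (indices mod `m`): its `i`-th diagonal
block is `I − (1/2) P i`, its `(i, i-1)` block is `(1/2) P i`, and all other blocks vanish. -/
noncomputable def cycM (m n : ℕ) [NeZero m] (P : Fin m → Matrix (Fin n) (Fin n) ℝ) :
    Matrix (Fin m × Fin n) (Fin m × Fin n) ℝ :=
  Matrix.of fun p q =>
    (if q.1 = p.1 then ((1 : Matrix (Fin n) (Fin n) ℝ) - (1 / 2 : ℝ) • P p.1) p.2 q.2 else 0) +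
    (if q.1 = p.1 - 1 then ((1 / 2 : ℝ) • P p.1) p.2 q.2 else 0)

section ProjAux

variable {κ n : ℕ}

lemma isUnit_CCt (C : Matrix (Fin κ) (Fin n) ℝ) (h : C.rank = κ) :
    IsUnit (C * Cᵀ).det := by
  have hker : LinearMap.ker (Cᵀ).mulVecLin = ⊥ := by
    have h1 : finrank ℝ (LinearMap.range (Cᵀ).mulVecLin) = κ := by
      rw [← Matrix.rank]; rw [Matrix.rank_transpose]; exact h
    have h2 := LinearMap.finrank_range_add_finrank_ker (Cᵀ).mulVecLin
    rw [h1, Module.finrank_pi ℝ, Fintype.card_fin] at h2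
    have : finrank ℝ (LinearMap.ker (Cᵀ).mulVecLin) = 0 := by omega
    exact Submodule.finrank_eq_zero.mp this
  rw [isUnit_iff_ne_zero]
  intro hdet
  obtain ⟨v, hv, hmul⟩ := (Matrix.exists_mulVec_eq_zero_iff).mpr hdet
  apply hv
  have h3 : Cᵀ.mulVec v = 0 := by
    have h4 : (Cᵀᵀ * Cᵀ).mulVec v = 0 := by
      rwa [transpose_transpose]
    have := congr_arg (dotProduct v) h4
    rw [← mulVec_mulVec, dotProduct_mulVec, dotProduct_zero, vecMul_transpose,
      dotProduct_self_eq_zero] at this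
    exact this
  have := hker.le (LinearMap.mem_ker.mpr h3)
  simpa using this

lemma CP_eq (C : Matrix (Fin κ) (Fin n) ℝ) (h : C.rank = κ) :
    C * (Cᵀ * (C * Cᵀ)⁻¹ * C) = C := by
  have hu := isUnit_CCt C h
  calc C * (Cᵀ * (C * Cᵀ)⁻¹ * C) = (C * Cᵀ) * (C * Cᵀ)⁻¹ * C := by
        simp [Matrix.mul_assoc]
    _ = C := by rw [Matrix.mul_nonsing_inv _ hu, Matrix.one_mul]

lemma P_symm (C : Matrix (Fin κ) (Fin n) ℝ) :
    (Cᵀ * (C * Cᵀ)⁻¹ * C)ᵀ = Cᵀ * (C * Cᵀ)⁻¹ * C := by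
  rw [Matrix.transpose_mul, Matrix.transpose_mul, Matrix.transpose_nonsing_inv,
    Matrix.transpose_mul, Matrix.transpose_transpose]
  simp [Matrix.mul_assoc]

lemma P_idem (C : Matrix (Fin κ) (Fin n) ℝ) (h : C.rank = κ) :
    (Cᵀ * (C * Cᵀ)⁻¹ * C) * (Cᵀ * (C * Cᵀ)⁻¹ * C) = Cᵀ * (C * Cᵀ)⁻¹ * C := by
  conv_lhs => rw [Matrix.mul_assoc, CP_eq C h]

lemma P_mulVec_eq_zero (C : Matrix (Fin κ) (Fin n) ℝ) (h : C.rank = κ) (v : Fin n → ℝ) :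
    (Cᵀ * (C * Cᵀ)⁻¹ * C).mulVec v = 0 ↔ C.mulVec v = 0 := by
  constructor
  · intro hv
    have := congr_arg (C.mulVec) hv
    rw [mulVec_mulVec, CP_eq C h, mulVec_zero] at this
    exact this
  · intro hv
    rw [← mulVec_mulVec, hv, mulVec_zero]

lemma dot_self_proj (Q : Matrix (Fin n) (Fin n) ℝ) (hQ : Qᵀ = Q) (hQQ : Q * Q = Q)
    (d : Fin n → ℝ) : (Q.mulVec d) ⬝ᵥ d = (Q.mulVec d) ⬝ᵥ (Q.mulVec d) := by
  symm
  calc (Q.mulVec d) ⬝ᵥ (Q.mulVec d) = ((Q.mulVec d) ᵥ* Q) ⬝ᵥ d := dotProduct_mulVec _ _ _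
    _ = (Qᵀ.mulVec (Q.mulVec d)) ⬝ᵥ d := by rw [← Matrix.mulVec_transpose]
    _ = (Q.mulVec d) ⬝ᵥ d := by rw [hQ, mulVec_mulVec, hQQ]

end ProjAux

/-- characteristic polynomial shift by one -/
lemma charpoly_sub_one {ι : Type*} [DecidableEq ι] [Fintype ι] (M : Matrix ι ι ℝ) :
    (M - 1).charpoly = M.charpoly.comp (X + Polynomial.C 1) := by
  have hmap : (Polynomial.eval₂RingHom (Polynomial.C : ℝ →+* ℝ[X])
      (X + Polynomial.C 1)).mapMatrix (charmatrix M) = charmatrix (M - 1) := by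
    ext i j
    by_cases h : i = j
    · subst h
      simp only [RingHom.mapMatrix_apply, Matrix.map_apply, charmatrix_apply_eq,
        coe_eval₂RingHom, eval₂_sub, eval₂_X, eval₂_C, Matrix.sub_apply, Matrix.one_apply_eq,
        map_sub]
      ring_nf
    · simp only [RingHom.mapMatrix_apply, Matrix.map_apply, charmatrix_apply_ne _ _ _ h,
        coe_eval₂RingHom, eval₂_neg, eval₂_C, Matrix.sub_apply, Matrix.one_apply_ne h,
        sub_zero, charmatrix_apply_ne _ _ _ h]
  rw [Matrix.charpoly, Matrix.charpoly, ← hmap, ← RingHom.map_det]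
  rfl



lemma cycM_mulVec {m n : ℕ} [NeZero m] (P : Fin m → Matrix (Fin n) (Fin n) ℝ)
    (x : Fin m × Fin n → ℝ) (i : Fin m) (a : Fin n) :
    (cycM m n P).mulVec x (i, a) =
      ((1 : Matrix (Fin n) (Fin n) ℝ) - (1 / 2 : ℝ) • P i).mulVec (fun b => x (i, b)) a
        + ((1 / 2 : ℝ) • P i).mulVec (fun b => x (i - 1, b)) a := by
  simp only [Matrix.mulVec, dotProduct, cycM, Matrix.of_apply, add_mul, ite_mul, zero_mul,
    Finset.sum_add_distrib, Fintype.sum_prod_type]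
  congr 1
  · rw [Finset.sum_comm]
    simp [Finset.sum_ite_eq]
  · rw [Finset.sum_comm]
    simp [Finset.sum_ite_eq]

lemma one_sub_cycM_mulVec {m n : ℕ} [NeZero m] (P : Fin m → Matrix (Fin n) (Fin n) ℝ)
    (x : Fin m × Fin n → ℝ) (i : Fin m) (a : Fin n) :
    ((1 : Matrix (Fin m × Fin n) (Fin m × Fin n) ℝ) - cycM m n P).mulVec x (i, a) =
      ((1 / 2 : ℝ) • P i).mulVec (fun b => x (i, b) - x (i - 1, b)) a := by
  rw [Matrix.sub_mulVec, Matrix.one_mulVec, Pi.sub_apply, cycM_mulVec, Matrix.sub_mulVec,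
    Matrix.one_mulVec]
  have : ((1/2 : ℝ) • P i).mulVec (fun b => x (i, b) - x (i - 1, b))
      = ((1/2 : ℝ) • P i).mulVec (fun b => x (i, b))
        - ((1/2 : ℝ) • P i).mulVec (fun b => x (i - 1, b)) := by
    rw [← Matrix.mulVec_sub]
    rfl
  rw [this]
  simp only [Pi.sub_apply]
  ring_nf

section Main

variable {m n : ℕ} [NeZero m] (k : Fin m → ℕ)
    (C : (i : Fin m) → Matrix (Fin (k i)) (Fin n) ℝ)

include k C in
lemma A_mulVec_eq_zero_iff (hrank : ∀ i, (C i).rank = k i) (x : Fin m × Fin n → ℝ) :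
    ((1 : Matrix (Fin m × Fin n) (Fin m × Fin n) ℝ)
        - cycM m n (fun i => (C i)ᵀ * (C i * (C i)ᵀ)⁻¹ * C i)).mulVec x = 0 ↔
      ∀ i, (C i).mulVec (fun b => x (i, b) - x (i - 1, b)) = 0 := by
  constructor
  · intro hx i
    rw [← P_mulVec_eq_zero (C i) (hrank i)]
    have h2 : ∀ a, ((1 / 2 : ℝ) • ((C i)ᵀ * (C i * (C i)ᵀ)⁻¹ * C i)).mulVec
        (fun b => x (i, b) - x (i - 1, b)) a = 0 := by
      intro a
      have h0 := one_sub_cycM_mulVec (fun j => (C j)ᵀ * (C j * (C j)ᵀ)⁻¹ * C j) x i a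
      rw [hx] at h0
      simpa using h0.symm
    funext a
    have ha := h2 a
    rw [Matrix.smul_mulVec] at ha
    have h5 : ((C i)ᵀ * (C i * (C i)ᵀ)⁻¹ * C i).mulVec
        (fun b => x (i, b) - x (i - 1, b)) a = 2 * 0 := by
      rw [← ha]; simp
    simpa using h5
  · intro hx
    funext p
    obtain ⟨i, a⟩ := p
    rw [one_sub_cycM_mulVec]
    have h6 : ((C i)ᵀ * (C i * (C i)ᵀ)⁻¹ * C i).mulVec
        (fun b => x (i, b) - x (i - 1, b)) = 0 := by
      rw [P_mulVec_eq_zero (C i) (hrank i)]; exact hx i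
    rw [Matrix.smul_mulVec, h6]
    simp

lemma ker_sq (hm : 2 ≤ m) (hrank : ∀ i, (C i).rank = k i)
    (hwc : ∀ y : Fin m → (Fin n → ℝ),
      (∀ i : Fin m, (C i).mulVec (y i - y (i - 1)) = 0) → ∀ i j, y i = y j)
    (x : Fin m × Fin n → ℝ)
    (hx : ((1 : Matrix (Fin m × Fin n) (Fin m × Fin n) ℝ)
        - cycM m n (fun i => (C i)ᵀ * (C i * (C i)ᵀ)⁻¹ * C i)).mulVec
        (((1 : Matrix (Fin m × Fin n) (Fin m × Fin n) ℝ)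
        - cycM m n (fun i => (C i)ᵀ * (C i * (C i)ᵀ)⁻¹ * C i)).mulVec x) = 0) :
    ((1 : Matrix (Fin m × Fin n) (Fin m × Fin n) ℝ)
        - cycM m n (fun i => (C i)ᵀ * (C i * (C i)ᵀ)⁻¹ * C i)).mulVec x = 0 := by
  set A := (1 : Matrix (Fin m × Fin n) (Fin m × Fin n) ℝ)
        - cycM m n (fun i => (C i)ᵀ * (C i * (C i)ᵀ)⁻¹ * C i) with hA
  set y := A.mulVec x with hy
  -- the slices of y are all equal to a constant c
  have hYwc : ∀ i j : Fin m, (fun b => y (i, b)) = (fun b => y (j, b)) := by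
    have h1 := (A_mulVec_eq_zero_iff k C hrank y).mp hx
    exact hwc (fun i b => y (i, b)) (fun i => h1 i)
  set c : Fin n → ℝ := fun b => y (0, b) with hc
  have hcy : ∀ i b, y (i, b) = c b := fun i b => congrFun (hYwc i 0) b
  -- the defect vectors
  set d : Fin m → Fin n → ℝ := fun i b => x (i, b) - x (i - 1, b) with hd
  have hyd : ∀ i, ((C i)ᵀ * (C i * (C i)ᵀ)⁻¹ * C i).mulVec (d i) = (2 : ℝ) • c := by
    intro i
    funext b
    have h0 := one_sub_cycM_mulVec (fun j => (C j)ᵀ * (C j * (C j)ᵀ)⁻¹ * C j) x i b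
    rw [← hA, ← hy] at h0
    rw [hcy i b] at h0
    rw [Matrix.smul_mulVec] at h0
    have : (1/2 : ℝ) * ((((C i)ᵀ * (C i * (C i)ᵀ)⁻¹ * C i)).mulVec (d i) b) = c b := h0.symm
    simp only [Pi.smul_apply, smul_eq_mul]
    linarith
  -- scalar dot product identity
  have key : ∀ i : Fin m, c ⬝ᵥ d i = 2 * (c ⬝ᵥ c) := by
    intro i
    have hproj := dot_self_proj ((C i)ᵀ * (C i * (C i)ᵀ)⁻¹ * C i) (P_symm (C i))
      (P_idem (C i) (hrank i)) (d i)
    rw [hyd i] at hproj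
    -- hproj : (2 • c) ⬝ᵥ d i = (2 • c) ⬝ᵥ (2 • c)
    have h1 : (2 : ℝ) * (c ⬝ᵥ d i) = (2 : ℝ) * ((2 : ℝ) * (c ⬝ᵥ c)) := by
      have e1 : ((2 : ℝ) • c) ⬝ᵥ d i = (2 : ℝ) * (c ⬝ᵥ d i) := smul_dotProduct _ _ _
      have e2 : ((2 : ℝ) • c) ⬝ᵥ ((2 : ℝ) • c) = (2 : ℝ) * ((2 : ℝ) * (c ⬝ᵥ c)) := by
        simp only [smul_dotProduct, dotProduct_smul, smul_eq_mul]
      rw [← e1, ← e2]; exact hproj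
    linarith
  -- sum of defects vanishes
  have hsum_b : ∀ b, ∑ i : Fin m, d i b = 0 := by
    intro b
    show ∑ i : Fin m, (x (i, b) - x (i - 1, b)) = 0
    rw [Finset.sum_sub_distrib, sub_eq_zero]
    exact (Fintype.sum_equiv (Equiv.subRight (1 : Fin m)) (fun i => x (i - 1, b))
      (fun i => x (i, b)) (fun i => rfl)).symm
  -- conclude c = 0
  have hc0 : c = 0 := by
    have h2 : ∑ i : Fin m, c ⬝ᵥ d i = 0 := by
      simp only [dotProduct]
      rw [Finset.sum_comm]
      simp only [← Finset.mul_sum]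
      simp [hsum_b]
    rw [Finset.sum_congr rfl (fun i _ => key i), Finset.sum_const, Finset.card_univ,
      Fintype.card_fin, nsmul_eq_mul] at h2
    have hm0 : (0 : ℝ) < (m : ℝ) := by positivity
    have : c ⬝ᵥ c = 0 := by
      have hmne : (m : ℝ) ≠ 0 := ne_of_gt hm0
      rcases mul_eq_zero.mp h2 with h | h
      · exact absurd h hmne
      · linarith
    exact dotProduct_self_eq_zero.mp this
  funext p
  have : y (p.1, p.2) = c p.2 := hcy p.1 p.2
  rw [hc0] at this
  simpa using this

end Main


/-- For full-row-rank matrices `C i` with `n` columns, `Pᵢ = Cᵢᵀ(CᵢCᵢᵀ)⁻¹Cᵢ` and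
the corresponding cycle update matrix `M`, if the weighted cycle is well-configured, then the
eigenvalue `1` of `M` has algebraic multiplicity exactly `n`, and
`ker (I − M)² = ker (I − M)` (all Jordan blocks for the eigenvalue `1` have size `1`). -/
theorem stmt_18 (m n : ℕ) [NeZero m] (hm : 2 ≤ m) (k : Fin m → ℕ)
    (C : (i : Fin m) → Matrix (Fin (k i)) (Fin n) ℝ)
    (hrank : ∀ i, (C i).rank = k i)
    (hwc : ∀ y : Fin m → (Fin n → ℝ),
      (∀ i : Fin m, (C i).mulVec (y i - y (i - 1)) = 0) → ∀ i j, y i = y j) :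
    Polynomial.rootMultiplicity (1 : ℝ)
      (cycM m n (fun i => (C i)ᵀ * (C i * (C i)ᵀ)⁻¹ * C i)).charpoly = n ∧
    LinearMap.ker ((((1 : Matrix (Fin m × Fin n) (Fin m × Fin n) ℝ) -
          cycM m n (fun i => (C i)ᵀ * (C i * (C i)ᵀ)⁻¹ * C i)) *
        ((1 : Matrix (Fin m × Fin n) (Fin m × Fin n) ℝ) -
          cycM m n (fun i => (C i)ᵀ * (C i * (C i)ᵀ)⁻¹ * C i))).mulVecLin) =
    LinearMap.ker (((1 : Matrix (Fin m × Fin n) (Fin m × Fin n) ℝ) -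
        cycM m n (fun i => (C i)ᵀ * (C i * (C i)ᵀ)⁻¹ * C i)).mulVecLin) := by
  set MM := cycM m n (fun i => (C i)ᵀ * (C i * (C i)ᵀ)⁻¹ * C i) with hMM
  set A := (1 : Matrix (Fin m × Fin n) (Fin m × Fin n) ℝ) - MM with hA'
  have hker2 : ∀ x, A.mulVec (A.mulVec x) = 0 → A.mulVec x = 0 := fun x hx =>
    ker_sq k C hm hrank hwc x hx
  set ψ := A.mulVecLin with hψ
  set φ := (MM - 1).mulVecLin with hφ
  have hMA : MM - 1 = -A := by rw [hA', neg_sub]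
  have hφx : ∀ x, φ x = -(A.mulVec x) := by
    intro x
    rw [hφ, Matrix.mulVecLin_apply, hMA, Matrix.neg_mulVec]
  have hker2φ : ∀ x, φ (φ x) = 0 → φ x = 0 := by
    intro x h
    rw [hφx, hφx, Matrix.mulVec_neg, neg_neg] at h
    rw [hφx, neg_eq_zero]
    exact hker2 x h
  have hpow : ∀ (j : ℕ) (x : Fin m × Fin n → ℝ), (φ ^ (j + 1)) x = 0 → φ x = 0 := by
    intro j
    induction j with
    | zero => intro x h; rw [pow_one] at h; exact h
    | succ j ih =>
      intro x h
      have h1 : (φ ^ (j + 1)) (φ x) = 0 := by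
        rw [← Module.End.mul_apply, ← pow_succ]
        exact h
      exact hker2φ x (ih (φ x) h1)
  have hgen : Module.End.maxGenEigenspace φ 0 = LinearMap.ker ψ := by
    ext x
    rw [Module.End.mem_maxGenEigenspace]
    simp only [zero_smul, sub_zero, LinearMap.mem_ker]
    constructor
    · rintro ⟨j, hj⟩
      match j with
      | 0 =>
        simp only [pow_zero, Module.End.one_apply] at hj
        rw [hψ, Matrix.mulVecLin_apply, hj, mulVec_zero]
      | j + 1 =>
        have := hpow j x hj
        rw [hφx, neg_eq_zero] at this
        exact this
    · intro hx
      refine ⟨1, ?_⟩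
      rw [pow_one, hφx, neg_eq_zero]
      exact hx
  have hkerψ : LinearMap.ker ψ =
      LinearMap.range (LinearMap.funLeft ℝ ℝ (Prod.snd : Fin m × Fin n → Fin n)) := by
    ext x
    simp only [LinearMap.mem_ker, LinearMap.mem_range, hψ, Matrix.mulVecLin_apply]
    constructor
    · intro hx
      have h1 := (A_mulVec_eq_zero_iff k C hrank x).mp hx
      have h2 := hwc (fun i b => x (i, b)) (fun i => h1 i)
      refine ⟨fun b => x (0, b), ?_⟩
      funext p
      exact congrFun (h2 0 p.1) p.2
    · rintro ⟨c, rfl⟩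
      rw [A_mulVec_eq_zero_iff k C hrank]
      intro i
      have h3 : (fun b => (LinearMap.funLeft ℝ ℝ (Prod.snd : Fin m × Fin n → Fin n) c) (i, b)
          - (LinearMap.funLeft ℝ ℝ (Prod.snd : Fin m × Fin n → Fin n) c) (i - 1, b))
          = (0 : Fin n → ℝ) := by
        funext b
        simp [LinearMap.funLeft_apply]
      rw [h3, mulVec_zero]
  have hfr : finrank ℝ (LinearMap.ker ψ) = n := by
    rw [hkerψ, LinearMap.finrank_range_of_inj, Module.finrank_pi, Fintype.card_fin]
    exact LinearMap.funLeft_injective_of_surjective ℝ ℝ _ Prod.snd_surjective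
  have hchar : LinearMap.charpoly φ = (MM - 1).charpoly := by
    rw [← LinearMap.charpoly_toMatrix φ (Pi.basisFun ℝ (Fin m × Fin n))]
    rw [LinearMap.toMatrix_eq_toMatrix']
    rw [hφ, ← Matrix.toLin'_apply', LinearMap.toMatrix'_toLin']
  constructor
  · calc Polynomial.rootMultiplicity (1 : ℝ) MM.charpoly
        = natTrailingDegree (MM.charpoly.comp (X + Polynomial.C 1)) :=
          Polynomial.rootMultiplicity_eq_natTrailingDegree
      _ = natTrailingDegree ((MM - 1).charpoly) := by rw [charpoly_sub_one]
      _ = natTrailingDegree (LinearMap.charpoly φ) := by rw [hchar]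
      _ = finrank ℝ (Module.End.maxGenEigenspace φ 0) :=
          (LinearMap.finrank_maxGenEigenspace_zero_eq φ).symm
      _ = n := by rw [hgen, hfr]
  · ext x
    simp only [LinearMap.mem_ker, Matrix.mulVecLin_apply]
    rw [← Matrix.mulVec_mulVec]
    constructor
    · exact hker2 x
    · intro h
      have h' : A.mulVec x = 0 := h
      rw [h', mulVec_zero]
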